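/- Under single-source initialization, every non-target edge whose source is not reachable from the head of the target link keeps a zero feature forever: for every k ≥ 0 and every triple (x,y,z) ∈ T with (x,y,z) ≠ (u,r_t,v) such that x is not reachable from v in T, e^k_{x,y,z} = 0. -/

import Mathlib

/-- `ReachableFrom T v z` means `z = v` or there is a nonempty sequence of triples of `T`,
chained head-to-tail, whose first triple has tail `v` and whose last triple has head `z`. -/
def ReachableFrom {V R : Type*} (T : Finset (V × R × V)) (v z : V) : Prop :=
  z = v ∨ ∃ (l : List (V × R × V)) (hne : l ≠ []),
    (∀ t ∈ l, t ∈ T) ∧ l.Chain' (fun a b => a.2.2 = b.1) ∧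
    (l.head hne).1 = v ∧ (l.getLast hne).2.2 = z

/-- Under single-source initialization, every non-target edge whose source is not
reachable from the head `v` of the target link keeps a zero feature forever: for every
`k ≥ 0` and every `(x,y,z) ∈ T` with `(x,y,z) ≠ (u,r_t,v)` such that `x` is not reachable
from `v` in `T`, `e^k_{x,y,z} = 0`. -/
theorem edge_feature_zero_off_reachable_set
    {V R : Type*} [Fintype V] [Fintype R] [DecidableEq V] [DecidableEq R]
    (T : Finset (V × R × V)) (d : ℕ) (hd : 1 ≤ d) (r : R → Fin d → ℝ)
    (u v : V) (rt : R) (hT : (u, rt, v) ∈ T) (huv : u ≠ v)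
    (h : ℕ → V → Fin d → ℝ) (e : ℕ → V × R × V → Fin d → ℝ)
    (hh0 : ∀ z : V, h 0 z = 0)
    (he0 : ∀ t : V × R × V, e 0 t = if t = (u, rt, v) then r rt else 0)
    (hh : ∀ k : ℕ, 1 ≤ k → ∀ z : V,
      h k z = ∑ t ∈ T.filter (fun t => t.2.2 = z), (h (k - 1) t.1 + e (k - 1) t) * r t.2.1)
    (he : ∀ k : ℕ, 1 ≤ k → ∀ t ∈ T, e k t = h k t.1 + e (k - 1) t) :
    ∀ (k : ℕ), ∀ t ∈ T, t ≠ (u, rt, v) → ¬ ReachableFrom T v t.1 → e k t = 0 := by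
  -- step lemma for reachability
  have step : ∀ x y z, (x, y, z) ∈ T → ReachableFrom T v x → ReachableFrom T v z := by
    intro x y z hxyz hx
    rcases hx with rfl | ⟨l, hne, hmem, hchain, hhead, hlast⟩
    · right
      exact ⟨[(x, y, z)], by simp, by simpa using hxyz, List.isChain_singleton _, rfl, rfl⟩
    · right
      refine ⟨l ++ [(x, y, z)], by simp, ?_, ?_, ?_, ?_⟩
      · intro t ht
        rcases List.mem_append.mp ht with ht | ht
        · exact hmem t ht
        · simpa using (by simpa using ht : t = (x, y, z)) ▸ hxyz
      · simp only [List.Chain']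
        rw [List.isChain_append]
        refine ⟨hchain, List.isChain_singleton _, ?_⟩
        intro a ha b hb
        have ha' : a = l.getLast hne := by
          rwa [List.getLast?_eq_getLast hne, Option.mem_some_iff, eq_comm] at ha
        have hb' : b = (x, y, z) := by simpa [eq_comm] using hb
        rw [ha', hb', hlast]
      · rw [List.head_append_of_ne_nil hne]; exact hhead
      · simp
  -- strong statement: also h vanishes off the reachable set
  have main : ∀ k : ℕ,
      (∀ z : V, ¬ ReachableFrom T v z → h k z = 0) ∧
      (∀ t ∈ T, t ≠ (u, rt, v) → ¬ ReachableFrom T v t.1 → e k t = 0) := by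
    intro k
    induction k with
    | zero =>
      refine ⟨fun z _ => hh0 z, fun t _ hne _ => ?_⟩
      rw [he0 t, if_neg hne]
    | succ k ih =>
      obtain ⟨ihh, ihe⟩ := ih
      have hk : ∀ z : V, ¬ ReachableFrom T v z → h (k + 1) z = 0 := by
        intro z hz
        rw [hh (k + 1) (Nat.le_add_left 1 k) z]
        refine Finset.sum_eq_zero ?_
        intro t ht
        obtain ⟨htT, htz⟩ := Finset.mem_filter.mp ht
        obtain ⟨x, y, z'⟩ := t
        simp only at htz
        subst htz
        have hne : (x, y, z') ≠ (u, rt, v) := by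
          intro heq
          injection heq with h1 h2
          injection h2 with h3 h4
          exact hz (Or.inl h4)
        have hx : ¬ ReachableFrom T v x := fun hx => hz (step x y z' htT hx)
        have h1 : h (k + 1 - 1) x = 0 := ihh x hx
        have h2 : e (k + 1 - 1) (x, y, z') = 0 := ihe (x, y, z') htT hne hx
        simp only [Nat.add_sub_cancel] at *
        rw [h1, h2, add_zero, zero_mul]
      refine ⟨hk, ?_⟩
      intro t htT hne hx
      rw [he (k + 1) (Nat.le_add_left 1 k) t htT, hk t.1 hx,
        Nat.add_sub_cancel, ihe t htT hne hx, add_zero]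
  exact fun k => (main k).2
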